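/- arXiv:1106.0472 — 2 statements merged into one kernel-verified Lean document; each statement's English description precedes it below -/
import Mathlib

section
/- Let (u_i) be a normalised basic sequence in a Banach space such that for every choice of signs ε_i ∈ {−1,1}, the sequence (u_{2i−1}) is equivalent to (ε_{2i} u_{2i}). Then (u_{2i−1}) is an unconditional basic sequence. -/
open Filter Topology

noncomputable section

structure NormedSchauderBasis (X : Type*) [NormedAddCommGroup X] [NormedSpace ℝ X] where
  e : ℕ → X
  coord : ℕ → X →L[ℝ] ℝ
  biorth : ∀ n m, coord n (e m) = if n = m then 1 else 0
  expansion : ∀ x : X,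
    Filter.Tendsto (fun N => ∑ n ∈ Finset.range N, coord n x • e n) Filter.atTop (nhds x)
  normalised : ∀ n, ‖e n‖ = 1

section Defs

variable {X Y : Type*} [NormedAddCommGroup X] [NormedSpace ℝ X]
  [NormedAddCommGroup Y] [NormedSpace ℝ Y]

/-- Convergence of the series `∑ x n` (of partial sums). -/
def Converges (x : ℕ → X) : Prop :=
  ∃ s, Filter.Tendsto (fun N => ∑ n ∈ Finset.range N, x n) Filter.atTop (nhds s)

/-- Two sequences are equivalent if the same scalar series converge. -/
def SeqEquiv (x : ℕ → X) (y : ℕ → Y) : Prop :=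
  ∀ a : ℕ → ℝ, Converges (fun n => a n • x n) ↔ Converges (fun n => a n • y n)

/-- `C`-equivalence of two sequences. -/
def CEquiv (C : ℝ) (x : ℕ → X) (y : ℕ → Y) : Prop :=
  ∀ (a : ℕ → ℝ) (N : ℕ),
    C⁻¹ * ‖∑ n ∈ Finset.range N, a n • y n‖ ≤ ‖∑ n ∈ Finset.range N, a n • x n‖ ∧
    ‖∑ n ∈ Finset.range N, a n • x n‖ ≤ C * ‖∑ n ∈ Finset.range N, a n • y n‖

/-- A basic sequence: uniformly bounded partial-sum projections. -/
def IsBasicSeq (x : ℕ → X) : Prop :=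
  ∃ K, 1 ≤ K ∧ ∀ (a : ℕ → ℝ) (m n : ℕ), m ≤ n →
    ‖∑ i ∈ Finset.range m, a i • x i‖ ≤ K * ‖∑ i ∈ Finset.range n, a i • x i‖

/-- A sequence of signs. -/
def IsSigns (θ : ℕ → ℝ) : Prop := ∀ n, θ n = 1 ∨ θ n = -1

end Defs

namespace NormedSchauderBasis

variable {X : Type*} [NormedAddCommGroup X] [NormedSpace ℝ X] (b : NormedSchauderBasis X)

/-- Support of a vector with respect to the basis. -/
def supp (x : X) : Set ℕ := {n | b.coord n x ≠ 0}

/-- A normalised block sequence of the basis. -/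
def IsBlockSeq (x : ℕ → X) : Prop :=
  (∀ n, ‖x n‖ = 1) ∧ (∀ n, (b.supp (x n)).Finite) ∧
  ∀ n, ∀ i ∈ b.supp (x n), ∀ j ∈ b.supp (x (n+1)), i < j

/-- Unconditionality of the basis. -/
def Unconditional : Prop :=
  ∀ θ : ℕ → ℝ, IsSigns θ → SeqEquiv (fun n => θ n • b.e n) b.e

/-- 1-unconditionality (finite-sum form). -/
def OneUnconditional : Prop :=
  ∀ (θ a : ℕ → ℝ), IsSigns θ → ∀ N,
    ‖∑ n ∈ Finset.range N, (θ n * a n) • b.e n‖ ≤ ‖∑ n ∈ Finset.range N, a n • b.e n‖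

/-- The shift property: every normalised block sequence is equivalent to its shift. -/
def ShiftProperty : Prop :=
  ∀ x : ℕ → X, b.IsBlockSeq x → SeqEquiv x (fun n => x (n+1))

/-- The basis is shrinking. -/
def Shrinking : Prop :=
  ∀ f : X →L[ℝ] ℝ, Filter.Tendsto
    (fun n => sSup ((fun y => |f y|) ''
      {y | y ∈ Submodule.span ℝ (Set.range fun i => b.e (n + i)) ∧ ‖y‖ ≤ 1}))
    Filter.atTop (nhds 0)

/-- The basis is boundedly complete. -/
def BoundedlyComplete : Prop :=
  ∀ a : ℕ → ℝ, (∃ M, ∀ N, ‖∑ i ∈ Finset.range N, a i • b.e i‖ ≤ M) →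
    Converges (fun i => a i • b.e i)

end NormedSchauderBasis

theorem odd_subsequence_unconditional
    {X : Type*} [NormedAddCommGroup X] [NormedSpace ℝ X] [CompleteSpace X]
    (u : ℕ → X) (hbasic : IsBasicSeq u) (hnorm : ∀ n, ‖u n‖ = 1)
    (h : ∀ ε : ℕ → ℝ, IsSigns ε →
      SeqEquiv (fun i => u (2*i)) (fun i => ε i • u (2*i+1))) :
    ∀ a : ℕ → ℝ, Converges (fun i => a i • u (2*i)) →
      ∀ ε : ℕ → ℝ, IsSigns ε → Converges (fun i => (ε i * a i) • u (2*i)) := by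
  intro a ha ε hε
  have hone : IsSigns (fun _ => (1:ℝ)) := fun n => Or.inl rfl
  have h1 : Converges (fun i => a i • u (2*i+1)) := by
    have := (h _ hone a).mp ha
    simpa using this
  have h2 : Converges (fun i => (ε i * a i) • (ε i • u (2*i+1))) := by
    have heq : (fun i => (ε i * a i) • (ε i • u (2*i+1)))
        = fun i => a i • u (2*i+1) := by
      funext i
      rw [smul_smul]
      rcases hε i with h' | h' <;> rw [h'] <;> ring_nf
    rw [heq]; exact h1
  exact (h ε hε _).mpr h2
end
end

section
/- With Z = (Σ ℓ_∞^{k_i}) normed by |||y|||' = ‖Σ_j ‖Z_j y‖ w_j‖ where (w_j) is 1-unconditional with the shift property with constant C, let (y_i) be a normalised block sequence of (f_j) such that for each j at most one i has Z_j y_i ≠ 0. Then (y_i) is equivalent to (f_{r_i}) with r_i = min supp y_i. Concretely, setting z_i = Σ_{j=n_i}^{m_i} ‖Z_j y_i‖ w_j (a normalised block sequence of (w_j)), one has |||Σ λ_i y_i|||' = ‖Σ |λ_i| z_i‖ and (z_i) ~ (w_{n_i}) ~ (f_{r_i}). -/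
open Filter Topology

noncomputable section

structure SchauderBasis' (X : Type*) [NormedAddCommGroup X] [NormedSpace ℝ X] where
  e : ℕ → X
  coord : ℕ → X →L[ℝ] ℝ
  biorth : ∀ n m, coord n (e m) = if n = m then 1 else 0
  expansion : ∀ x : X,
    Filter.Tendsto (fun N => ∑ n ∈ Finset.range N, coord n x • e n) Filter.atTop (nhds x)
  normalised : ∀ n, ‖e n‖ = 1

namespace SchauderBasis'

variable {X : Type*} [NormedAddCommGroup X] [NormedSpace ℝ X] (b : SchauderBasis' X)

/-- Support of a vector with respect to the basis. -/
def supp (x : X) : Set ℕ := {n | b.coord n x ≠ 0}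

/-- A normalised block sequence of the basis. -/
def IsBlockSeq (x : ℕ → X) : Prop :=
  (∀ n, ‖x n‖ = 1) ∧ (∀ n, (b.supp (x n)).Finite) ∧
  ∀ n, ∀ i ∈ b.supp (x n), ∀ j ∈ b.supp (x (n+1)), i < j

/-- Unconditionality of the basis. -/
def Unconditional : Prop :=
  ∀ θ : ℕ → ℝ, IsSigns θ → SeqEquiv (fun n => θ n • b.e n) b.e

/-- 1-unconditionality (finite-sum form). -/
def OneUnconditional : Prop :=
  ∀ (θ a : ℕ → ℝ), IsSigns θ → ∀ N,
    ‖∑ n ∈ Finset.range N, (θ n * a n) • b.e n‖ ≤ ‖∑ n ∈ Finset.range N, a n • b.e n‖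

/-- The shift property: every normalised block sequence is equivalent to its shift. -/
def ShiftProperty : Prop :=
  ∀ x : ℕ → X, b.IsBlockSeq x → SeqEquiv x (fun n => x (n+1))

/-- The basis is shrinking. -/
def Shrinking : Prop :=
  ∀ f : X →L[ℝ] ℝ, Filter.Tendsto
    (fun n => sSup ((fun y => |f y|) ''
      {y | y ∈ Submodule.span ℝ (Set.range fun i => b.e (n + i)) ∧ ‖y‖ ≤ 1}))
    Filter.atTop (nhds 0)

/-- The basis is boundedly complete. -/
def BoundedlyComplete : Prop :=
  ∀ a : ℕ → ℝ, (∃ M, ∀ N, ‖∑ i ∈ Finset.range N, a i • b.e i‖ ≤ M) →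
    Converges (fun i => a i • b.e i)

end SchauderBasis'

/-- `offset k n` is the start index of the `n`-th block. -/
def offset (k : ℕ → ℕ) (n : ℕ) : ℕ := ∑ i ∈ Finset.range n, k i

/-- The sup of `|c|` over the `i`-th block of indices. -/
def blockSup (k : ℕ → ℕ) (hk : ∀ i, 1 ≤ k i) (c : ℕ → ℝ) (i : ℕ) : ℝ :=
  (Finset.range (k i)).sup' (Finset.nonempty_range_iff.mpr (by have := hk i; omega))
    fun t => |c (offset k i + t)|

section Stmt16

variable {X : Type*} [NormedAddCommGroup X] [NormedSpace ℝ X]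

/-- The vector with (finitely supported) coefficients `c` with respect to `v`. -/
def vecOf (v : ℕ → X) (c : ℕ →₀ ℝ) : X := ∑ j ∈ c.support, c j • v j

/-- Shift property with constant `C`: any two jointly successive normalised block
sequences of `v` are `C`-equivalent. -/
def ShiftPropertyWithConst (C : ℝ) (v : ℕ → X) : Prop :=
  ∀ cz cw : ℕ → (ℕ →₀ ℝ),
    (∀ i, ‖vecOf v (cz i)‖ = 1) → (∀ i, ‖vecOf v (cw i)‖ = 1) →
    (∀ i, ∀ a ∈ (cz i).support ∪ (cw i).support,
          ∀ b ∈ (cz (i+1)).support ∪ (cw (i+1)).support, a < b) →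
    CEquiv C (fun i => vecOf v (cz i)) (fun i => vecOf v (cw i))

/-- The sup of the absolute values of the coordinates of `z` in the `j`-th block. -/
def coordBlockSup {Z : Type*} [NormedAddCommGroup Z] [NormedSpace ℝ Z]
    (bZ : SchauderBasis' Z) (k : ℕ → ℕ) (hk : ∀ i, 1 ≤ k i) (j : ℕ) (z : Z) : ℝ :=
  (Finset.range (k j)).sup' (Finset.nonempty_range_iff.mpr (by have := hk j; omega))
    fun t => |bZ.coord (offset k j + t) z|

section Aux
variable {X Y : Type*} [NormedAddCommGroup X] [NormedSpace ℝ X]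
  [NormedAddCommGroup Y] [NormedSpace ℝ Y]

lemma sum_ite_ge_eq_Ico (z : ℕ → X) (a : ℕ → ℝ) {N n : ℕ} (hn : N ≤ n) :
    ∑ i ∈ Finset.range n, (if N ≤ i then a i else 0) • z i
      = ∑ i ∈ Finset.range n, a i • z i - ∑ i ∈ Finset.range N, a i • z i := by
  rw [eq_sub_iff_add_eq, Finset.range_eq_Ico,
    ← Finset.sum_Ico_consecutive (fun i => a i • z i) (Nat.zero_le N) hn,
    ← Finset.sum_Ico_consecutive (fun i => (if N ≤ i then a i else 0) • z i) (Nat.zero_le N) hn]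
  have h1 : ∑ i ∈ Finset.Ico 0 N, (if N ≤ i then a i else 0) • z i = 0 := by
    apply Finset.sum_eq_zero
    intro i hi
    simp only [Finset.mem_Ico] at hi
    rw [if_neg (by omega), zero_smul]
  have h2 : ∀ s : Finset ℕ, (∀ i ∈ s, N ≤ i) →
      ∑ i ∈ s, (if N ≤ i then a i else 0) • z i = ∑ i ∈ s, a i • z i := by
    intro s hs
    exact Finset.sum_congr rfl fun i hi => by rw [if_pos (hs i hi)]
  rw [h1, h2 _ (fun i hi => (Finset.mem_Ico.mp hi).1), zero_add, add_comm]
  rw [Finset.range_eq_Ico]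

lemma converges_of_dominated [CompleteSpace X]
    (x : ℕ → X) (y : ℕ → Y) (C : ℝ) (hC : 0 < C)
    (h : ∀ (a : ℕ → ℝ) (N : ℕ),
      ‖∑ i ∈ Finset.range N, a i • x i‖ ≤ C * ‖∑ i ∈ Finset.range N, a i • y i‖)
    (a : ℕ → ℝ) (hy : Converges (fun n => a n • y n)) : Converges (fun n => a n • x n) := by
  obtain ⟨s, hs⟩ := hy
  have hcy : CauchySeq (fun N => ∑ i ∈ Finset.range N, a i • y i) := hs.cauchySeq
  have hcx : CauchySeq (fun N => ∑ i ∈ Finset.range N, a i • x i) := by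
    rw [Metric.cauchySeq_iff'] at hcy ⊢
    intro ε hε
    obtain ⟨N, hN⟩ := hcy (ε / C) (by positivity)
    refine ⟨N, fun n hn => ?_⟩
    have := h (fun i => if N ≤ i then a i else 0) n
    rw [sum_ite_ge_eq_Ico x a hn, sum_ite_ge_eq_Ico y a hn] at this
    rw [dist_eq_norm]
    calc ‖∑ i ∈ Finset.range n, a i • x i - ∑ i ∈ Finset.range N, a i • x i‖
        ≤ C * ‖∑ i ∈ Finset.range n, a i • y i - ∑ i ∈ Finset.range N, a i • y i‖ := this
      _ < C * (ε / C) := by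
          apply mul_lt_mul_of_pos_left _ hC
          rw [← dist_eq_norm]; exact hN n hn
      _ = ε := by field_simp
  obtain ⟨s', hs'⟩ := cauchySeq_tendsto_of_complete hcx
  exact ⟨s', hs'⟩

lemma seqEquiv_of_cequiv [CompleteSpace X] [CompleteSpace Y]
    {C : ℝ} (hC : 0 < C) {x : ℕ → X} {y : ℕ → Y} (h : CEquiv C x y) : SeqEquiv x y := by
  intro a
  constructor
  · intro hx
    exact converges_of_dominated y x C hC (fun a N => by
      have := (h a N).1
      rwa [inv_mul_le_iff₀ hC] at this) a hx
  · intro hy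
    exact converges_of_dominated x y C hC (fun a N => (h a N).2) a hy

end Aux
section Aux2

lemma offset_succ (k : ℕ → ℕ) (n : ℕ) : offset k (n+1) = offset k n + k n :=
  Finset.sum_range_succ k n

lemma offset_mono (k : ℕ → ℕ) : Monotone (offset k) := by
  intro a b hab
  exact Finset.sum_le_sum_of_subset (Finset.range_subset_range.mpr hab)

lemma le_offset (k : ℕ → ℕ) (hk : ∀ i, 1 ≤ k i) (n : ℕ) : n ≤ offset k n := by
  induction n with
  | zero => simp
  | succ n ih => rw [offset_succ]; have := hk n; omega

lemma offset_strictMono (k : ℕ → ℕ) (hk : ∀ i, 1 ≤ k i) : StrictMono (offset k) := by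
  intro a b hab
  calc offset k a < offset k a + k a := by have := hk a; omega
    _ = offset k (a+1) := (offset_succ k a).symm
    _ ≤ offset k b := offset_mono k hab

/-- Every position lies in a unique block. -/
lemma exists_block (k : ℕ → ℕ) (hk : ∀ i, 1 ≤ k i) (p : ℕ) :
    ∃ j t, t < k j ∧ p = offset k j + t := by
  set j := Nat.findGreatest (fun j => offset k j ≤ p) p with hj
  have h0 : offset k j ≤ p := by
    exact Nat.findGreatest_spec (P := fun j => offset k j ≤ p) (m := 0) (Nat.zero_le p)
      (by simp [offset])
  have h1 : p < offset k (j+1) := by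
    by_contra h
    push_neg at h
    have hle : j + 1 ≤ p := le_trans (le_offset k hk (j+1)) h
    have hlt : j < j + 1 := Nat.lt_succ_self j
    exact Nat.findGreatest_is_greatest hlt hle h
  rw [offset_succ] at h1
  exact ⟨j, p - offset k j, by omega, by omega⟩

lemma block_unique (k : ℕ → ℕ) (hk : ∀ i, 1 ≤ k i) {j t j' t' : ℕ}
    (ht : t < k j) (ht' : t' < k j')
    (h : offset k j + t = offset k j' + t') : j = j' := by
  by_contra hne
  rcases Nat.lt_or_ge j j' with hlt | hge
  · have h1 : offset k (j+1) ≤ offset k j' := offset_mono k hlt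
    rw [offset_succ] at h1; omega
  · have hlt : j' < j := lt_of_le_of_ne hge (Ne.symm hne)
    have h1 : offset k (j'+1) ≤ offset k j := offset_mono k hlt
    rw [offset_succ] at h1; omega

section Basis
variable {X : Type*} [NormedAddCommGroup X] [NormedSpace ℝ X] (b : SchauderBasis' X)

lemma coord_finsum (p : ℕ) (s : Finset ℕ) (c : ℕ → ℝ) :
    b.coord p (∑ j ∈ s, c j • b.e j) = if p ∈ s then c p else 0 := by
  rw [map_sum]
  have : ∀ j ∈ s, b.coord p (c j • b.e j) = if p = j then c j else 0 := by
    intro j _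
    rw [map_smul, b.biorth p j]
    by_cases h : p = j <;> simp [h]
  rw [Finset.sum_congr rfl this, Finset.sum_ite_eq s p c]

lemma finite_expansion (x : X) (M : ℕ) (hsub : ∀ p, b.coord p x ≠ 0 → p < M) :
    x = ∑ p ∈ Finset.range M, b.coord p x • b.e p := by
  have hexp := b.expansion x
  have hev : (fun N => ∑ n ∈ Finset.range N, b.coord n x • b.e n) =ᶠ[Filter.atTop]
      (fun _ => ∑ p ∈ Finset.range M, b.coord p x • b.e p) := by
    filter_upwards [Filter.eventually_ge_atTop M] with N hN
    symm
    apply Finset.sum_subset (Finset.range_subset_range.mpr hN)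
    intro p _ hp
    rw [Finset.mem_range] at hp
    push_neg at hp
    have : b.coord p x = 0 := by
      by_contra h; exact absurd (hsub p h) (by omega)
    rw [this, zero_smul]
  have := hexp.congr' hev
  exact tendsto_nhds_unique this tendsto_const_nhds

end Basis
end Aux2
section Aux3

lemma mul_sup' {α : Type*} (s : Finset α) (H : s.Nonempty) (f : α → ℝ) {c : ℝ} (hc : 0 ≤ c) :
    c * s.sup' H f = s.sup' H (fun x => c * f x) := by
  apply le_antisymm
  · obtain ⟨b, hb, hbe⟩ := Finset.exists_mem_eq_sup' H f
    rw [hbe]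
    exact Finset.le_sup' (fun x => c * f x) hb
  · apply Finset.sup'_le
    intro x hx
    exact mul_le_mul_of_nonneg_left (Finset.le_sup' f hx) hc

lemma sup'_abs_zero {α : Type*} (s : Finset α) (H : s.Nonempty) (f : α → ℝ)
    (h : ∀ t ∈ s, f t = 0) : s.sup' H (fun t => |f t|) = 0 := by
  rw [Finset.sup'_congr H rfl (g := fun _ => 0) (fun t ht => by rw [h t ht, abs_zero])]
  exact Finset.sup'_const H 0

section Key

variable {W Z : Type*} [NormedAddCommGroup W] [NormedSpace ℝ W]
  [NormedAddCommGroup Z] [NormedSpace ℝ Z]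

lemma key_norm_eq
    (bW : SchauderBasis' W)
    (k : ℕ → ℕ) (hk : ∀ i, 1 ≤ k i)
    (bZ : SchauderBasis' Z)
    (hnormZ : ∀ (lam : ℕ → ℝ) (N : ℕ),
      ‖∑ j ∈ Finset.range (offset k N), lam j • bZ.e j‖ =
      ‖∑ i ∈ Finset.range N, blockSup k hk lam i • bW.e i‖)
    (y : ℕ → Z)
    (hatmostone : ∀ j i i',
      (∃ t, t < k j ∧ bZ.coord (offset k j + t) (y i) ≠ 0) →
      (∃ t, t < k j ∧ bZ.coord (offset k j + t) (y i') ≠ 0) → i = i')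
    (n m : ℕ → ℕ)
    (hnm : ∀ i, (∃ t, t < k (n i) ∧ bZ.coord (offset k (n i) + t) (y i) ≠ 0) ∧
      (∃ t, t < k (m i) ∧ bZ.coord (offset k (m i) + t) (y i) ≠ 0) ∧
      ∀ j, (∃ t, t < k j ∧ bZ.coord (offset k j + t) (y i) ≠ 0) → n i ≤ j ∧ j ≤ m i)
    (lam : ℕ → ℝ) (N : ℕ) :
    ‖∑ i ∈ Finset.range N, lam i • y i‖ =
    ‖∑ i ∈ Finset.range N,
      |lam i| • (∑ j ∈ Finset.Icc (n i) (m i), coordBlockSup bZ k hk j (y i) • bW.e j)‖ := by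
  classical
  set M := (Finset.range N).sup m + 1 with hM
  -- support bound for each y i, i < N
  have hbound : ∀ i ∈ Finset.range N, ∀ p, bZ.coord p (y i) ≠ 0 → p < offset k M := by
    intro i hi p hp
    obtain ⟨j, t, ht, rfl⟩ := exists_block k hk p
    have hj : j ≤ m i := ((hnm i).2.2 j ⟨t, ht, hp⟩).2
    have hmi : m i ≤ (Finset.range N).sup m := Finset.le_sup hi
    have hjM : j + 1 ≤ M := by omega
    calc offset k j + t < offset k j + k j := by omega
      _ = offset k (j+1) := (offset_succ k j).symm
      _ ≤ offset k M := offset_mono k hjM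
  -- expand the left sum
  set c : ℕ → ℝ := fun p => ∑ i ∈ Finset.range N, lam i * bZ.coord p (y i) with hc
  have hexp : ∑ i ∈ Finset.range N, lam i • y i
      = ∑ p ∈ Finset.range (offset k M), c p • bZ.e p := by
    have h1 : ∀ i ∈ Finset.range N, lam i • y i
        = ∑ p ∈ Finset.range (offset k M), (lam i * bZ.coord p (y i)) • bZ.e p := by
      intro i hi
      conv_lhs => rw [finite_expansion bZ (y i) (offset k M) (hbound i hi)]
      rw [Finset.smul_sum]
      exact Finset.sum_congr rfl fun p _ => smul_smul _ _ _
    rw [Finset.sum_congr rfl h1, Finset.sum_comm]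
    exact Finset.sum_congr rfl fun p _ => by rw [hc, Finset.sum_smul]
  rw [hexp, hnormZ c M]
  congr 1
  have hIcc : ∀ i ∈ Finset.range N, Finset.Icc (n i) (m i) ⊆ Finset.range M := by
    intro i hi j hj
    rw [Finset.mem_Icc] at hj
    rw [Finset.mem_range]
    have := Finset.le_sup (f := m) hi
    omega
  have hrhs : ∑ i ∈ Finset.range N,
        |lam i| • (∑ j ∈ Finset.Icc (n i) (m i), coordBlockSup bZ k hk j (y i) • bW.e j)
      = ∑ j ∈ Finset.range M, (∑ i ∈ Finset.range N,
          if j ∈ Finset.Icc (n i) (m i) then |lam i| * coordBlockSup bZ k hk j (y i) else 0)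
          • bW.e j := by
    have h2 : ∀ i ∈ Finset.range N,
        |lam i| • (∑ j ∈ Finset.Icc (n i) (m i), coordBlockSup bZ k hk j (y i) • bW.e j)
        = ∑ j ∈ Finset.range M,
            (if j ∈ Finset.Icc (n i) (m i) then |lam i| * coordBlockSup bZ k hk j (y i) else 0)
            • bW.e j := by
      intro i hi
      simp only [ite_smul, zero_smul]
      rw [Finset.sum_ite_mem, Finset.inter_eq_right.mpr (hIcc i hi), Finset.smul_sum]
      exact Finset.sum_congr rfl fun j _ => smul_smul _ _ _
    rw [Finset.sum_congr rfl h2, Finset.sum_comm]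
    exact Finset.sum_congr rfl fun j _ => by rw [Finset.sum_smul]
  rw [hrhs]
  apply Finset.sum_congr rfl
  intro j hj
  congr 1
  by_cases hex : ∃ i ∈ Finset.range N, ∃ t, t < k j ∧ bZ.coord (offset k j + t) (y i) ≠ 0
  · obtain ⟨i0, hi0, t0, ht0, hne0⟩ := hex
    have hzero : ∀ i ∈ Finset.range N, i ≠ i0 → ∀ t < k j, bZ.coord (offset k j + t) (y i) = 0 := by
      intro i _ hne t ht
      by_contra h
      exact hne (hatmostone j i i0 ⟨t, ht, h⟩ ⟨t0, ht0, hne0⟩)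
    have hcval : ∀ t < k j, c (offset k j + t) = lam i0 * bZ.coord (offset k j + t) (y i0) := by
      intro t ht
      rw [hc]
      exact Finset.sum_eq_single_of_mem i0 hi0
        (fun i hi hne => by rw [hzero i hi hne t ht, mul_zero])
    have hbs : blockSup k hk c j = |lam i0| * coordBlockSup bZ k hk j (y i0) := by
      unfold blockSup coordBlockSup
      rw [mul_sup' _ _ _ (abs_nonneg _)]
      apply Finset.sup'_congr _ rfl
      intro t ht
      rw [Finset.mem_range] at ht
      rw [hcval t ht, abs_mul]
    have hj0mem : j ∈ Finset.Icc (n i0) (m i0) := by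
      rw [Finset.mem_Icc]
      exact (hnm i0).2.2 j ⟨t0, ht0, hne0⟩
    have hsum : (∑ i ∈ Finset.range N,
        if j ∈ Finset.Icc (n i) (m i) then |lam i| * coordBlockSup bZ k hk j (y i) else 0)
        = |lam i0| * coordBlockSup bZ k hk j (y i0) := by
      rw [Finset.sum_eq_single_of_mem i0 hi0 ?_, if_pos hj0mem]
      intro i hi hne
      by_cases hmem : j ∈ Finset.Icc (n i) (m i)
      · rw [if_pos hmem]
        have hz : coordBlockSup bZ k hk j (y i) = 0 := by
          unfold coordBlockSup
          apply sup'_abs_zero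
          intro t ht
          exact hzero i hi hne t (Finset.mem_range.mp ht)
        rw [hz, mul_zero]
      · rw [if_neg hmem]
    rw [hbs, hsum]
  · push_neg at hex
    have hbs : blockSup k hk c j = 0 := by
      unfold blockSup
      apply sup'_abs_zero
      intro t ht
      rw [hc]
      apply Finset.sum_eq_zero
      intro i hi
      rw [hex i hi t (Finset.mem_range.mp ht), mul_zero]
    rw [hbs]
    symm
    apply Finset.sum_eq_zero
    intro i hi
    by_cases hmem : j ∈ Finset.Icc (n i) (m i)
    · rw [if_pos hmem]
      have hz : coordBlockSup bZ k hk j (y i) = 0 := by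
        unfold coordBlockSup
        apply sup'_abs_zero
        intro t ht
        exact hex i hi t (Finset.mem_range.mp ht)
      rw [hz, mul_zero]
    · rw [if_neg hmem]

end Key
end Aux3
theorem disjoint_block_sequence_equivalent
    {W Z : Type*} [NormedAddCommGroup W] [NormedSpace ℝ W] [CompleteSpace W]
    [NormedAddCommGroup Z] [NormedSpace ℝ Z] [CompleteSpace Z]
    (bW : SchauderBasis' W) (h1uW : bW.OneUnconditional)
    (C : ℝ) (hC1 : 1 ≤ C) (hshift : ShiftPropertyWithConst C bW.e)
    (k : ℕ → ℕ) (hk : ∀ i, 1 ≤ k i)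
    (bZ : SchauderBasis' Z)
    (hnormZ : ∀ (lam : ℕ → ℝ) (N : ℕ),
      ‖∑ j ∈ Finset.range (offset k N), lam j • bZ.e j‖ =
      ‖∑ i ∈ Finset.range N, blockSup k hk lam i • bW.e i‖)
    (y : ℕ → Z) (hy : bZ.IsBlockSeq y)
    (hatmostone : ∀ j i i',
      (∃ t, t < k j ∧ bZ.coord (offset k j + t) (y i) ≠ 0) →
      (∃ t, t < k j ∧ bZ.coord (offset k j + t) (y i') ≠ 0) → i = i')
    (n m : ℕ → ℕ)
    (hnm : ∀ i, (∃ t, t < k (n i) ∧ bZ.coord (offset k (n i) + t) (y i) ≠ 0) ∧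
      (∃ t, t < k (m i) ∧ bZ.coord (offset k (m i) + t) (y i) ≠ 0) ∧
      ∀ j, (∃ t, t < k j ∧ bZ.coord (offset k j + t) (y i) ≠ 0) → n i ≤ j ∧ j ≤ m i)
    (r : ℕ → ℕ) (hr : ∀ i, r i ∈ bZ.supp (y i) ∧ ∀ q ∈ bZ.supp (y i), r i ≤ q) :
    (∀ i, ‖∑ j ∈ Finset.Icc (n i) (m i), coordBlockSup bZ k hk j (y i) • bW.e j‖ = 1) ∧
    (∀ (lam : ℕ → ℝ) (N : ℕ),
      ‖∑ i ∈ Finset.range N, lam i • y i‖ =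
      ‖∑ i ∈ Finset.range N,
        |lam i| • (∑ j ∈ Finset.Icc (n i) (m i), coordBlockSup bZ k hk j (y i) • bW.e j)‖) ∧
    SeqEquiv (fun i => ∑ j ∈ Finset.Icc (n i) (m i), coordBlockSup bZ k hk j (y i) • bW.e j)
      (fun i => bW.e (n i)) ∧
    SeqEquiv y (fun i => bZ.e (r i)) := by
  classical
  have hCpos : (0:ℝ) < C := lt_of_lt_of_le one_pos hC1
  set z : ℕ → W :=
    fun i => ∑ j ∈ Finset.Icc (n i) (m i), coordBlockSup bZ k hk j (y i) • bW.e j with hzdef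
  have hkey : ∀ (lam : ℕ → ℝ) (N : ℕ),
      ‖∑ i ∈ Finset.range N, lam i • y i‖ = ‖∑ i ∈ Finset.range N, |lam i| • z i‖ :=
    key_norm_eq bW k hk bZ hnormZ y hatmostone n m hnm
  -- Part 1: norms of z
  have hz1 : ∀ i, ‖z i‖ = 1 := by
    intro i
    have h := hkey (fun t => if t = i then 1 else 0) (i+1)
    have e1 : ∑ t ∈ Finset.range (i+1), (if t = i then (1:ℝ) else 0) • y t = y i := by
      simp [ite_smul]
    have e2 : ∑ t ∈ Finset.range (i+1), |if t = i then (1:ℝ) else 0| • z t = z i := by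
      simp [apply_ite abs, ite_smul]
    rw [e1, e2] at h
    rw [← h]
    exact hy.1 i
  -- n i ≤ m i
  have hnmle : ∀ i, n i ≤ m i := fun i => ((hnm i).2.2 (n i) (hnm i).1).2
  -- m i < n (i+1)
  have hmn : ∀ i, m i < n (i+1) := by
    intro i
    obtain ⟨t, ht, hcoord⟩ := (hnm i).2.1
    obtain ⟨t', ht', hcoord'⟩ := (hnm (i+1)).1
    have horder : offset k (m i) + t < offset k (n (i+1)) + t' :=
      hy.2.2 i (offset k (m i) + t) hcoord (offset k (n (i+1)) + t') hcoord'
    have hle : m i ≤ n (i+1) := by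
      by_contra hlt
      push_neg at hlt
      have h2 : offset k (n (i+1) + 1) ≤ offset k (m i) := offset_mono k hlt
      rw [offset_succ] at h2
      omega
    rcases Nat.lt_or_ge (m i) (n (i+1)) with h | h
    · exact h
    · exfalso
      have heq : m i = n (i+1) := le_antisymm hle h
      have hx' : ∃ t, t < k (m i) ∧ bZ.coord (offset k (m i) + t) (y (i+1)) ≠ 0 := by
        rw [heq]; exact ⟨t', ht', hcoord'⟩
      have := hatmostone (m i) i (i+1) ⟨t, ht, hcoord⟩ hx'
      omega
  have hnsm : StrictMono n :=
    strictMono_nat_of_lt_succ (fun i => lt_of_le_of_lt (hnmle i) (hmn i))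
  -- Part 3 : CEquiv via the shift property
  have hcequivZ : CEquiv C z (fun i => bW.e (n i)) := by
    set cz : ℕ → (ℕ →₀ ℝ) := fun i =>
      Finsupp.onFinset (Finset.Icc (n i) (m i))
        (fun j => if j ∈ Finset.Icc (n i) (m i) then coordBlockSup bZ k hk j (y i) else 0)
        (fun j hj => by by_contra hm; exact hj (by simp only [if_neg hm])) with hcz
    set cw : ℕ → (ℕ →₀ ℝ) := fun i => Finsupp.single (n i) 1 with hcw
    have hvz : ∀ i, vecOf bW.e (cz i) = z i := by
      intro i
      have hsub : (cz i).support ⊆ Finset.Icc (n i) (m i) := Finsupp.support_onFinset_subset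
      have h1 : vecOf bW.e (cz i) = ∑ j ∈ Finset.Icc (n i) (m i), (cz i) j • bW.e j :=
        Finset.sum_subset hsub
          (fun j _ hj => by rw [Finsupp.notMem_support_iff.mp hj, zero_smul])
      rw [h1, hzdef]
      exact Finset.sum_congr rfl fun j hj => by
        rw [hcz]
        simp only [Finsupp.onFinset_apply]
        rw [if_pos hj]
    have hvw : ∀ i, vecOf bW.e (cw i) = bW.e (n i) := by
      intro i
      rw [hcw]
      simp only [vecOf, Finsupp.support_single_ne_zero _ one_ne_zero,
        Finset.sum_singleton, Finsupp.single_eq_same, one_smul]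
    have h1 : ∀ i, ‖vecOf bW.e (cz i)‖ = 1 := fun i => by rw [hvz i]; exact hz1 i
    have h2 : ∀ i, ‖vecOf bW.e (cw i)‖ = 1 := fun i => by rw [hvw i]; exact bW.normalised (n i)
    have h3 : ∀ i, ∀ a ∈ (cz i).support ∪ (cw i).support,
        ∀ b ∈ (cz (i+1)).support ∪ (cw (i+1)).support, a < b := by
      intro i a ha b hb
      have hbnd : ∀ i' a', a' ∈ (cz i').support ∪ (cw i').support → n i' ≤ a' ∧ a' ≤ m i' := by
        intro i' a' ha'
        rcases Finset.mem_union.mp ha' with h | h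
        · have := Finsupp.support_onFinset_subset h
          exact Finset.mem_Icc.mp this
        · have := Finsupp.support_single_subset h
          rw [Finset.mem_singleton] at this
          exact ⟨this.ge, this.le.trans (hnmle i')⟩
      have ha' := hbnd i a ha
      have hb' := hbnd (i+1) b hb
      have := hmn i
      omega
    have := hshift cz cw h1 h2 h3
    have hfz : (fun i => vecOf bW.e (cz i)) = z := funext hvz
    have hfw : (fun i => vecOf bW.e (cw i)) = (fun i => bW.e (n i)) := funext hvw
    rwa [hfz, hfw] at this
  have hseq3 : SeqEquiv z (fun i => bW.e (n i)) := seqEquiv_of_cequiv hCpos hcequivZ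
  -- the block of r i is n i
  have hrblock : ∀ i, ∃ t, t < k (n i) ∧ r i = offset k (n i) + t := by
    intro i
    obtain ⟨j', t, ht, hre⟩ := exists_block k hk (r i)
    have hrcoord : bZ.coord (r i) (y i) ≠ 0 := (hr i).1
    have hcoordj : bZ.coord (offset k j' + t) (y i) ≠ 0 := by rwa [hre] at hrcoord
    have hge : n i ≤ j' := ((hnm i).2.2 j' ⟨t, ht, hcoordj⟩).1
    obtain ⟨t0, ht0, hc0⟩ := (hnm i).1
    have hmin : r i ≤ offset k (n i) + t0 := (hr i).2 _ hc0
    have hlt : j' < n i + 1 := by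
      by_contra hcon
      push_neg at hcon
      have : offset k (n i + 1) ≤ offset k j' := offset_mono k hcon
      rw [offset_succ] at this
      omega
    have hj'n : j' = n i := by omega
    subst hj'n
    exact ⟨t, ht, hre⟩
  have hrinj : ∀ i i', r i = r i' → i = i' := by
    intro i i' hrr
    obtain ⟨t, ht, he⟩ := hrblock i
    obtain ⟨t', ht', he'⟩ := hrblock i'
    have : n i = n i' := block_unique k hk ht ht' (by omega)
    exact hnsm.injective this
  -- norm identity for the bZ.e (r i) side
  have hcr : ∀ (a : ℕ → ℝ) (N : ℕ),
      ‖∑ i ∈ Finset.range N, |a i| • bW.e (n i)‖ =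
      ‖∑ i ∈ Finset.range N, a i • bZ.e (r i)‖ := by
    intro a N
    set M := (Finset.range N).sup n + 1 with hM
    set lam : ℕ → ℝ := fun p => ∑ i ∈ Finset.range N, if r i = p then a i else 0 with hlam
    have hnM : ∀ i ∈ Finset.range N, n i < M := by
      intro i hi
      have := Finset.le_sup (f := n) hi
      omega
    have hrM : ∀ i ∈ Finset.range N, r i < offset k M := by
      intro i hi
      obtain ⟨t, ht, he⟩ := hrblock i
      have h1 : offset k (n i + 1) ≤ offset k M := offset_mono k (hnM i hi)
      rw [offset_succ] at h1
      omega
    have hsum1 : ∑ p ∈ Finset.range (offset k M), lam p • bZ.e p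
        = ∑ i ∈ Finset.range N, a i • bZ.e (r i) := by
      rw [hlam]
      simp only [Finset.sum_smul, ite_smul, zero_smul]
      rw [Finset.sum_comm]
      apply Finset.sum_congr rfl
      intro i hi
      rw [Finset.sum_ite_eq (Finset.range (offset k M)) (r i) (fun p => a i • bZ.e p),
        if_pos (Finset.mem_range.mpr (hrM i hi))]
    rw [← hsum1, hnormZ lam M]
    congr 1
    -- ∑_{j<M} blockSup lam j • bW.e j = ∑_{i<N} |a i| • bW.e (n i)
    symm
    have hrhs : ∑ i ∈ Finset.range N, |a i| • bW.e (n i)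
        = ∑ j ∈ Finset.range M,
            (∑ i ∈ Finset.range N, if n i = j then |a i| else 0) • bW.e j := by
      simp only [Finset.sum_smul, ite_smul, zero_smul]
      rw [Finset.sum_comm]
      apply Finset.sum_congr rfl
      intro i hi
      rw [Finset.sum_ite_eq (Finset.range M) (n i) (fun j => |a i| • bW.e j),
        if_pos (Finset.mem_range.mpr (hnM i hi))]
    rw [hrhs]
    apply Finset.sum_congr rfl
    intro j hj
    congr 1
    -- ∑_i ite (n i = j) |a i| 0 = blockSup lam j
    by_cases hex : ∃ i ∈ Finset.range N, n i = j
    · obtain ⟨i0, hi0, hni0⟩ := hex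
      obtain ⟨t0, ht0, hre0⟩ := hrblock i0
      have hblam : ∀ p, lam p ≠ 0 → ∃ i ∈ Finset.range N, r i = p := by
        intro p hp
        by_contra hcon
        push_neg at hcon
        apply hp
        rw [hlam]
        exact Finset.sum_eq_zero fun i hi => if_neg (hcon i hi)
      have hlamblock : ∀ t < k j, offset k j + t ≠ r i0 → lam (offset k j + t) = 0 := by
        intro t ht hne
        by_contra hne0
        obtain ⟨i, hi, hri⟩ := hblam _ hne0
        obtain ⟨t', ht', hre⟩ := hrblock i
        have hni : n i = j := block_unique k hk ht' ht (by omega)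
        have : i = i0 := hnsm.injective (hni.trans hni0.symm)
        rw [this] at hri
        exact hne hri.symm
      have hlamri0 : lam (r i0) = a i0 := by
        simp only [hlam]
        rw [Finset.sum_eq_single_of_mem i0 hi0
          (fun i hi hne => if_neg (fun h => hne (hrinj i i0 h)))]
        rw [if_pos rfl]
      have hsum2 : (∑ i ∈ Finset.range N, if n i = j then |a i| else 0) = |a i0| := by
        rw [Finset.sum_eq_single_of_mem i0 hi0
          (fun i hi hne => if_neg (fun h => hne (hnsm.injective (h.trans hni0.symm)))),
          if_pos hni0]
      rw [hsum2]
      -- |a i0| = blockSup lam j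
      unfold blockSup
      apply le_antisymm
      · apply Finset.sup'_le
        intro t ht
        rw [Finset.mem_range] at ht
        by_cases hpe : offset k j + t = r i0
        · rw [hpe, hlamri0]
        · rw [hlamblock t ht hpe, abs_zero]
          exact abs_nonneg _
      · have ht0j : t0 ∈ Finset.range (k j) := Finset.mem_range.mpr (hni0 ▸ ht0)
        calc |a i0| = |lam (offset k j + t0)| := by rw [← hni0, ← hre0, hlamri0]
          _ ≤ _ := Finset.le_sup' (fun t => |lam (offset k j + t)|) ht0j
    · push_neg at hex
      have hlamz : ∀ t < k j, lam (offset k j + t) = 0 := by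
        intro t ht
        rw [hlam]
        apply Finset.sum_eq_zero
        intro i hi
        apply if_neg
        intro hcon
        obtain ⟨t', ht', hre⟩ := hrblock i
        exact hex i hi (block_unique k hk ht' ht (by omega))
      have h1 : blockSup k hk lam j = 0 := by
        unfold blockSup
        apply sup'_abs_zero
        intro t ht
        exact hlamz t (Finset.mem_range.mp ht)
      rw [h1]
      symm
      exact Finset.sum_eq_zero fun i hi => if_neg (hex i hi)
  -- Part 4: CEquiv y (bZ.e ∘ r)
  have hcy : CEquiv C y (fun i => bZ.e (r i)) := by
    intro a N
    have h1 := hkey a N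
    have h2 := hcequivZ (fun i => |a i|) N
    have h3 := hcr a N
    simp only at h2 ⊢
    constructor
    · rw [h1, ← h3]; exact h2.1
    · rw [h1, ← h3]; exact h2.2
  exact ⟨hz1, hkey, hseq3, seqEquiv_of_cequiv hCpos hcy⟩
end Stmt16
end
end
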